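/- arXiv:2403.13165 — 3 statements merged into one kernel-verified Lean document; each statement's English description precedes it below -/
import Mathlib

section
/- No functor M from the category H⁺ of set-system hypergraphs with weak homomorphisms to the category H of set-system hypergraphs with traditional homomorphisms satisfies M(G) = G for all objects G. -/
/-- A set-system hypergraph: edge set, vertex set, and endpoint assignment. -/
structure SSHyp : Type 1 where
  E : Type
  V : Type
  eps : E → Set V

/-- A traditional set-system hypergraph homomorphism. -/
structure TradHom (G H : SSHyp) where
  fe : G.E → H.E
  fv : G.V → H.V
  comm : ∀ e, H.eps (fe e) = fv '' G.eps e

/-- A weak set-system hypergraph homomorphism. -/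
structure WeakHom (G H : SSHyp) where
  fe : G.E → H.E
  fv : G.V → H.V
  sub : ∀ e, fv '' G.eps e ⊆ H.eps (fe e)

def TradHom.idH (G : SSHyp) : TradHom G G :=
  ⟨id, id, fun e => (Set.image_id _).symm⟩

def WeakHom.idH (G : SSHyp) : WeakHom G G :=
  ⟨id, id, fun e => by simp⟩

def TradHom.comp {G H K : SSHyp} (φ : TradHom G H) (ψ : TradHom H K) : TradHom G K :=
  ⟨ψ.fe ∘ φ.fe, ψ.fv ∘ φ.fv, fun e => by
    rw [Function.comp_apply, ψ.comm, φ.comm, Set.image_comp]⟩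

def WeakHom.comp {G H K : SSHyp} (φ : WeakHom G H) (ψ : WeakHom H K) : WeakHom G K :=
  ⟨ψ.fe ∘ φ.fe, ψ.fv ∘ φ.fv, fun e => by
    rw [Set.image_comp]
    exact (Set.image_mono (φ.sub e)).trans (ψ.sub (φ.fe e))⟩

/-- No functor `M : H⁺ → H` from set-system hypergraphs with weak homomorphisms to
set-system hypergraphs with traditional homomorphisms satisfies `M(G) = G` on objects. -/
theorem no_identity_on_objects_functor :
    ¬ ∃ M : ∀ G H : SSHyp, WeakHom G H → TradHom G H,
      (∀ G : SSHyp, M G G (WeakHom.idH G) = TradHom.idH G) ∧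
      (∀ (G H K : SSHyp) (φ : WeakHom G H) (ψ : WeakHom H K),
        M G K (φ.comp ψ) = (M G H φ).comp (M H K ψ)) := by
  rintro ⟨M, -, -⟩
  set G : SSHyp := ⟨Unit, Empty, fun _ => ∅⟩
  set H : SSHyp := ⟨Unit, Unit, fun _ => Set.univ⟩
  have φ : WeakHom G H := ⟨id, fun x => x.elim, fun e => by simp⟩
  have ψ := M G H φ
  have h := ψ.comm ()
  have : (() : Unit) ∈ H.eps (ψ.fe ()) := Set.mem_univ ()
  rw [h] at this
  obtain ⟨x, hx, -⟩ := this
  exact hx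
end

section
/- The factored clique-replacement functor R from set-system hypergraphs to simple graphs admits a right adjoint R★ given by simplicial closure: for every graph G and graph homomorphism f : R(H) → G, there is a unique hypergraph homomorphism f̂ : H → R★(G) such that θ_G ∘ R(f̂) = f, where θ_G is the identity vertex map. -/
/-- A set system. -/
structure SetSys : Type 1 where
  V : Type
  edges : Set (Set V)

/-- A graph is a set system whose edges all have cardinality 1 or 2. -/
def IsGraph (G : SetSys) : Prop := ∀ A ∈ G.edges, ∃ v w, A = {v, w}

/-- A set-system (graph) homomorphism. -/
def IsSSHom (G H : SetSys) (f : G.V → H.V) : Prop :=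
  ∀ A ∈ G.edges, f '' A ∈ H.edges

/-- The clique replacement functor `R` on objects: the graph whose edges are all pairs
`{v,w}` contained in a common edge of `H`. -/
def Robj (H : SSHyp) : SetSys :=
  ⟨H.V, {A | ∃ v w e, A = {v, w} ∧ v ∈ H.eps e ∧ w ∈ H.eps e}⟩

/-- The clique replacement functor `R` on homomorphisms: the vertex function. -/
def Rhom {G H : SSHyp} (φ : TradHom G H) :
    {f : (Robj G).V → (Robj H).V // IsSSHom (Robj G) (Robj H) f} :=
  ⟨φ.fv, fun A hA => by
    obtain ⟨v, w, e, rfl, hv, hw⟩ := hA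
    refine ⟨φ.fv v, φ.fv w, φ.fe e, ?_, ?_, ?_⟩
    · exact Set.image_pair _ _ _
    · rw [φ.comm]; exact ⟨v, hv, rfl⟩
    · rw [φ.comm]; exact ⟨w, hw, rfl⟩⟩

/-- The simplicial closure `R★(G)`: edges are all subsets `A` of `V(G)` such that every
pair from `A` is an edge of `G`. -/
def Rstar (G : SetSys) : SSHyp :=
  ⟨{A : Set G.V // ∀ v ∈ A, ∀ w ∈ A, ({v, w} : Set G.V) ∈ G.edges}, G.V,
    fun A => A.val⟩

/-- The counit `θ_G : R(R★(G)) → G`: the identity vertex map. -/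
def thetaR (G : SetSys) : {f : (Robj (Rstar G)).V → G.V // IsSSHom (Robj (Rstar G)) G f} :=
  ⟨id, fun A hA => by
    obtain ⟨v, w, e, rfl, hv, hw⟩ := hA
    exact (Set.image_id _ : _).symm ▸ e.property v hv w hw⟩

/-- The factored clique replacement functor `R` admits the simplicial closure `R★` as a
right adjoint: every graph homomorphism `f : R(H) → G` factors uniquely through `θ_G`
by a hypergraph homomorphism `f̂ : H → R★(G)`. -/
theorem simplicial_closure_right_adjoint (G : SetSys) (hG : IsGraph G) (H : SSHyp)
    (f : {f : (Robj H).V → G.V // IsSSHom (Robj H) G f}) :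
    ∃! fh : TradHom H (Rstar G), (thetaR G).val ∘ (Rhom fh).val = f.val := by
  refine ⟨⟨fun e => ⟨f.val '' H.eps e, ?_⟩, f.val, fun e => rfl⟩, rfl, ?_⟩
  · rintro v ⟨a, ha, rfl⟩ w ⟨b, hb, rfl⟩
    have : ({f.val a, f.val b} : Set G.V) = f.val '' {a, b} := by
      rw [Set.image_insert_eq, Set.image_singleton]
    rw [this]
    exact f.property _ ⟨a, b, e, rfl, ha, hb⟩
  · rintro ⟨fe, fv, comm⟩ hcomm
    have hfv : fv = f.val := hcomm
    subst hfv
    congr 1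
    funext e
    exact Subtype.ext (comm e)
end

section
/- The factored intersection functor Λ := S_M ∘ del ∘ N★ ∘ (−)‡ ∘ N_{H⁺} from set-system hypergraphs to simple graphs acts as: VΛ(G) = E(G), EΛ(G) = {{e,f} : ε_G(e) ∩ ε_G(f) ≠ ∅}, and Λ(φ) = E(φ) on traditional homomorphisms. -/
/-- The inclusion `N_{H⁺} : H → H⁺`. -/
def TradHom.toWeak {G H : SSHyp} (φ : TradHom G H) : WeakHom G H :=
  ⟨φ.fe, φ.fv, fun e => le_of_eq (φ.comm e).symm⟩

/-- The dual hypergraph `G‡`. -/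
def ddag (G : SSHyp) : SSHyp :=
  ⟨G.V, G.E, fun v => {e | v ∈ G.eps e}⟩

/-- The action of `(−)‡` on weak homomorphisms. -/
def ddagHom {G H : SSHyp} (φ : WeakHom G H) : WeakHom (ddag G) (ddag H) :=
  ⟨φ.fv, φ.fe, fun v => by
    rintro _ ⟨e, he, rfl⟩
    exact φ.sub e ⟨v, he, rfl⟩⟩

/-- `N★`: simplicial replacement. -/
def Nstar (G : SSHyp) : SSHyp :=
  ⟨{p : G.E × Set G.V // p.2 ⊆ G.eps p.1}, G.V, fun p => p.val.2⟩

/-- The action of `N★` on weak homomorphisms (yielding traditional homomorphisms). -/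
def NstarHom {G H : SSHyp} (φ : WeakHom G H) : TradHom (Nstar G) (Nstar H) :=
  ⟨fun p => ⟨(φ.fe p.val.1, φ.fv '' p.val.2),
      (Set.image_mono p.property).trans (φ.sub _)⟩,
    φ.fv, fun _ => rfl⟩

/-- `del`: deletion of all edges not of cardinality 1 or 2. -/
def delM (M : SSHyp) : SSHyp :=
  ⟨{e : M.E // ∃ v w, M.eps e = {v, w}}, M.V, fun e => M.eps e.val⟩

/-- The action of `del` on traditional homomorphisms. -/
def delMHom {M M' : SSHyp} (ψ : TradHom M M') : TradHom (delM M) (delM M') :=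
  ⟨fun e => ⟨ψ.fe e.val, by
      obtain ⟨v, w, h⟩ := e.property
      exact ⟨ψ.fv v, ψ.fv w, by
        rw [ψ.comm, h, Set.image_insert_eq, Set.image_singleton]⟩⟩,
    ψ.fv, fun e => ψ.comm e.val⟩

/-- `S_M`: multigraph simplification to a set system (simple graph). -/
def SM (M : SSHyp) : SetSys :=
  ⟨M.V, {A | ∃ e, A = M.eps e}⟩

/-- The action of `S_M` on traditional homomorphisms. -/
def SMHom {M M' : SSHyp} (ψ : TradHom M M') :
    {f : (SM M).V → (SM M').V // IsSSHom (SM M) (SM M') f} :=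
  ⟨ψ.fv, fun A hA => by
    obtain ⟨e, rfl⟩ := hA
    exact ⟨ψ.fe e, (ψ.comm e).symm⟩⟩

/-- The factored intersection functor `Λ := S_M ∘ del ∘ N★ ∘ (−)‡ ∘ N_{H⁺}` on objects. -/
def Lamobj (G : SSHyp) : SetSys := SM (delM (Nstar (ddag G)))

/-- The factored intersection functor on traditional homomorphisms. -/
def Lamhom {G H : SSHyp} (φ : TradHom G H) :
    {f : (Lamobj G).V → (Lamobj H).V // IsSSHom (Lamobj G) (Lamobj H) f} :=
  SMHom (delMHom (NstarHom (ddagHom φ.toWeak)))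

/-- Action of the factored intersection functor `Λ`: vertices of `Λ(G)` are the edges
of `G`, edges are the pairs `{e,f}` whose endpoint sets intersect, and the action on a
homomorphism `φ` is its edge function `E(φ)`. -/
theorem factored_intersection_action :
    (∀ G : SSHyp, (Lamobj G).V = G.E) ∧
    (∀ G : SSHyp, (Lamobj G).edges =
      {A : Set G.E | ∃ e f, A = {e, f} ∧ (G.eps e ∩ G.eps f).Nonempty}) ∧
    (∀ (G H : SSHyp) (φ : TradHom G H), (Lamhom φ).val = φ.fe) := by
  refine ⟨fun G => rfl, fun G => ?_, fun G H φ => rfl⟩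
  ext A
  constructor
  · rintro ⟨⟨⟨⟨x, B⟩, hB⟩, hcard⟩, rfl⟩
    obtain ⟨e, f, hef⟩ := hcard
    refine ⟨e, f, hef, x, ?_, ?_⟩
    · exact hB (show e ∈ A by rw [show A = {e, f} from hef]; exact Or.inl rfl)
    · exact hB (show f ∈ A by rw [show A = {e, f} from hef]; exact Or.inr rfl)
  · rintro ⟨e, f, rfl, x, hxe, hxf⟩
    refine ⟨⟨⟨⟨x, {e, f}⟩, ?_⟩, ⟨e, f, rfl⟩⟩, rfl⟩
    rintro g (rfl | rfl) <;> assumption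
end
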